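/- Let Γ be a distance-regular graph of diameter d whose odd girth (the length of its shortest odd cycle) equals 2d + 1. Then the metric dimension of its bipartite double D(Γ) equals the metric dimension of Γ: μ(D(Γ)) = μ(Γ). -/

import Mathlib

open SimpleGraph

/-- `R` is a resolving set for `G`: every pair of distinct vertices is
distinguished by its distances to some vertex of `R`. -/
def IsResolving {V : Type*} (G : SimpleGraph V) (R : Set V) : Prop :=
  ∀ u w : V, u ≠ w → ∃ v ∈ R, G.dist u v ≠ G.dist w v

/-- The metric dimension of `G`: the least size of a resolving set. -/
noncomputable def metricDim {V : Type*} (G : SimpleGraph V) : ℕ :=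
  sInf {n | ∃ R : Set V, IsResolving G R ∧ R.ncard = n}

/-- `G` has diameter `d`. -/
def HasDiam {V : Type*} (G : SimpleGraph V) (d : ℕ) : Prop :=
  (∀ u w : V, G.dist u w ≤ d) ∧ ∃ u w : V, G.dist u w = d

/-- `G` is distance-regular: there are parameters `cᵢ, aᵢ, bᵢ` such that for any
vertices `u, w` at distance `i`, the number of neighbours of `w` at distance
`i-1`, `i`, `i+1` from `u` is `cᵢ`, `aᵢ`, `bᵢ` respectively. -/
def IsDistRegular {V : Type*} (G : SimpleGraph V) : Prop :=
  ∃ c a b : ℕ → ℕ, ∀ (i : ℕ) (u w : V), G.dist u w = i →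
    {x | G.Adj w x ∧ G.dist u x = i - 1}.ncard = c i ∧
    {x | G.Adj w x ∧ G.dist u x = i}.ncard = a i ∧
    {x | G.Adj w x ∧ G.dist u x = i + 1}.ncard = b i

/-- The bipartite double of `G`: vertex set `V × Bool`, with `(u, b)` adjacent to
`(w, c)` iff `b ≠ c` and `u` is adjacent to `w` in `G`. -/
def bipDouble {V : Type*} (G : SimpleGraph V) : SimpleGraph (V × Bool) :=
  SimpleGraph.fromRel (fun p q => p.2 ≠ q.2 ∧ G.Adj p.1 q.1)

/-- if `G` is a distance-regular graph of diameter `d` whose odd girth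
(the length of a shortest odd cycle) is `2d + 1`, then the metric dimension of the
bipartite double `D(G)` equals that of `G`. -/
private lemma path_edge_len {V : Type*} {G : SimpleGraph V} {x y : V}
    (h : G.Adj x y) : ∀ (q : G.Walk y x), q.IsPath → s(x,y) ∈ q.edges → q.length = 1 := by
  intro q
  cases q with
  | nil => simp
  | cons h' q' =>
    intro hp he
    rw [SimpleGraph.Walk.edges_cons, List.mem_cons] at he
    rw [SimpleGraph.Walk.cons_isPath_iff] at hp
    rcases he with he | he
    · rw [Sym2.eq_iff] at he
      rcases he with ⟨hxy, _⟩ | ⟨hxz, _⟩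
      · exact absurd hxy h.ne
      · subst hxz
        have : q' = SimpleGraph.Walk.nil := SimpleGraph.Walk.isPath_iff_eq_nil.mp hp.1
        subst this
        simp
    · exact absurd (SimpleGraph.Walk.snd_mem_support_of_mem_edges q' he) hp.2

private lemma odd_closed_walk_cycle {V : Type*} {G : SimpleGraph V} :
    ∀ (n : ℕ) (x : V) (p : G.Walk x x), p.length = n → Odd n →
    ∃ (y : V) (c : G.Walk y y), c.IsCycle ∧ Odd c.length ∧ c.length ≤ n := by
  classical
  intro n
  induction n using Nat.strong_induction_on with
  | _ n ih =>
    intro x p hlen hodd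
    cases p with
    | nil =>
      rw [SimpleGraph.Walk.length_nil] at hlen
      simp [← hlen] at hodd
    | cons h q =>
      rename_i y
      by_cases hq : q.IsPath
      · by_cases he : s(x, y) ∈ q.edges
        · have h1 : q.length = 1 := path_edge_len h q hq he
          rw [SimpleGraph.Walk.length_cons, h1] at hlen
          subst hlen
          exact absurd hodd (by decide)
        · refine ⟨x, SimpleGraph.Walk.cons h q, ?_, ?_, ?_⟩
          · exact (SimpleGraph.Walk.cons_isCycle_iff q h).mpr ⟨hq, he⟩
          · rw [hlen]; exact hodd
          · omega
      · rw [SimpleGraph.Walk.isPath_def] at hq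
        obtain ⟨z, hz⟩ := List.exists_duplicate_iff_not_nodup.mpr hq
        have hcount : 2 ≤ q.support.count z := List.duplicate_iff_two_le_count.mp hz
        have hz1 : z ∈ q.support := List.count_pos_iff.mp (by omega)
        set q1 := q.takeUntil z hz1 with hq1
        set q2 := q.dropUntil z hz1 with hq2
        have hspec : q1.append q2 = q := q.take_spec hz1
        have hc1 : q1.support.count z = 1 := q.count_support_takeUntil_eq_one hz1
        have hcq : q.support.count z = q1.support.count z + q2.support.tail.count z := by
          rw [← hspec, SimpleGraph.Walk.support_append, List.count_append]
        have hc2t : 1 ≤ q2.support.tail.count z := by omega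
        have hc2 : 2 ≤ q2.support.count z := by
          rw [q2.support_eq_cons, List.count_cons_self]
          omega
        have hzr : z ∈ q2.reverse.support := SimpleGraph.Walk.end_mem_support _
        set s := q2.reverse.takeUntil z hzr with hs
        set t := q2.reverse.dropUntil z hzr with ht
        have hspec2 : s.append t = q2.reverse := q2.reverse.take_spec hzr
        have hcs : s.support.count z = 1 := q2.reverse.count_support_takeUntil_eq_one hzr
        have hcr : q2.reverse.support.count z = s.support.count z + t.support.tail.count z := by
          rw [← hspec2, SimpleGraph.Walk.support_append, List.count_append]
        have hcrev : q2.reverse.support.count z = q2.support.count z := by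
          rw [SimpleGraph.Walk.support_reverse, List.count_reverse]
        have hct : 1 ≤ t.support.tail.count z := by omega
        have htlen : 1 ≤ t.length := by
          have hne : t.support.tail ≠ [] := by
            intro hnil
            rw [hnil] at hct
            simp at hct
          have h2 : 2 ≤ t.support.length := by
            rw [t.support_eq_cons]
            cases hh : t.support.tail with
            | nil => exact absurd hh hne
            | cons a l => simp
          rw [t.length_support] at h2
          omega
        have hlen1 : s.length + t.length = q2.length := by
          have := congrArg SimpleGraph.Walk.length hspec2
          rw [SimpleGraph.Walk.length_append, SimpleGraph.Walk.length_reverse] at this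
          exact this
        have hlen2 : q1.length + q2.length = q.length := by
          have := congrArg SimpleGraph.Walk.length hspec
          rw [SimpleGraph.Walk.length_append] at this
          exact this
        have hn : q.length + 1 = n := by
          rw [← hlen]; simp
        set c1 : G.Walk z z := t.reverse with hc1def
        set c2 : G.Walk x x := SimpleGraph.Walk.cons h (q1.append s.reverse) with hc2def
        have hl1 : c1.length = t.length := SimpleGraph.Walk.length_reverse t
        have hl2 : c2.length = 1 + q1.length + s.length := by
          rw [hc2def, SimpleGraph.Walk.length_cons, SimpleGraph.Walk.length_append,
            SimpleGraph.Walk.length_reverse]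
          omega
        have hsum : c1.length + c2.length = n := by omega
        have hc2pos : 1 ≤ c2.length := by omega
        rcases Nat.even_or_odd c1.length with h1 | h1
        · obtain ⟨m, hm⟩ := h1
          obtain ⟨j, hj⟩ := hodd
          have hoc2 : Odd c2.length := ⟨j - m, by omega⟩
          obtain ⟨y', c, hc, hco, hcl⟩ := ih c2.length (by omega) x c2 rfl hoc2
          exact ⟨y', c, hc, hco, by omega⟩
        · obtain ⟨y', c, hc, hco, hcl⟩ := ih c1.length (by omega) z c1 rfl h1
          exact ⟨y', c, hc, hco, by omega⟩

section C2
variable {V : Type*} {G : SimpleGraph V} {d : ℕ}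

private lemma odd_ge
    (hodd₂ : ∀ (x : V) (w : G.Walk x x), w.IsCycle → Odd w.length → 2 * d + 1 ≤ w.length)
    (hocc : ∀ (n : ℕ) (x : V) (p : G.Walk x x), p.length = n → Odd n →
      ∃ (y : V) (c : G.Walk y y), c.IsCycle ∧ Odd c.length ∧ c.length ≤ n)
    {x : V} (p : G.Walk x x) (hp : Odd p.length) : 2 * d + 1 ≤ p.length := by
  obtain ⟨y, c, hc, hco, hcl⟩ := hocc p.length x p rfl hp
  exact le_trans (hodd₂ y c hc hco) hcl

private lemma exists_mid (hconn : G.Connected) :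
    ∀ (u w : V) (p : G.Walk u w), p.length = G.dist u w → ∀ i, i ≤ p.length →
      ∃ z, G.dist u z = i ∧ G.dist z w = p.length - i := by
  intro u w p
  induction p with
  | @nil u' =>
    intro _ i hi
    simp only [SimpleGraph.Walk.length_nil] at hi
    obtain rfl : i = 0 := Nat.le_zero.mp hi
    exact ⟨u', by simp⟩
  | @cons u y w h q ih =>
    intro hlen i hi
    have hq : q.length = G.dist y w := by
      have h1 : G.dist y w ≤ q.length := SimpleGraph.dist_le q
      have h2 : G.dist u w ≤ G.dist u y + G.dist y w := hconn.dist_triangle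
      have h3 : G.dist u y ≤ 1 := by
        have := SimpleGraph.dist_le (SimpleGraph.Walk.cons h SimpleGraph.Walk.nil)
        simpa using this
      rw [← hlen] at h2
      simp only [SimpleGraph.Walk.length_cons] at h2 ⊢
      omega
    cases i with
    | zero =>
      refine ⟨u, by simp, ?_⟩
      simp [← hlen]
    | succ j =>
      have hj : j ≤ q.length := by simp at hi; omega
      obtain ⟨z, hz1, hz2⟩ := ih hq j hj
      have hle : G.dist u z ≤ j + 1 := by
        have h2 : G.dist u z ≤ G.dist u y + G.dist y z := hconn.dist_triangle
        have h3 : G.dist u y ≤ 1 := by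
          have := SimpleGraph.dist_le (SimpleGraph.Walk.cons h SimpleGraph.Walk.nil)
          simpa using this
        omega
      have hge : j + 1 ≤ G.dist u z := by
        have h2 : G.dist u w ≤ G.dist u z + G.dist z w := hconn.dist_triangle
        rw [← hlen] at h2
        simp only [SimpleGraph.Walk.length_cons] at h2
        omega
      refine ⟨z, by omega, ?_⟩
      simp only [SimpleGraph.Walk.length_cons]
      omega

private lemma exists_pair (hconn : G.Connected) (hdiam : HasDiam G d) {i : ℕ} (hi : i ≤ d) :
    ∃ u z : V, G.dist u z = i := by
  obtain ⟨u, w, huw⟩ := hdiam.2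
  obtain ⟨p, hp⟩ := hconn.exists_walk_length_eq_dist u w
  obtain ⟨z, hz, -⟩ := exists_mid hconn u w p hp i (by omega)
  exact ⟨u, z, hz⟩

private lemma set_fin (P : V → Prop) [Fintype V] : {x | P x}.Finite := Set.toFinite _

private lemma extend [Fintype V] (hconn : G.Connected) (hdr : IsDistRegular G)
    (hdiam : HasDiam G d) {u w : V} {i : ℕ} (h : G.dist u w = i) (hi : i < d) :
    ∃ x, G.Adj w x ∧ G.dist u x = i + 1 := by
  obtain ⟨c, a, b, hb⟩ := hdr
  obtain ⟨p₀, q₀, hpq⟩ := exists_pair hconn hdiam (show i + 1 ≤ d by omega)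
  obtain ⟨g, hg⟩ := hconn.exists_walk_length_eq_dist p₀ q₀
  obtain ⟨z, hz1, hz2⟩ := exists_mid hconn p₀ q₀ g hg i (by omega)
  have hadj : G.Adj z q₀ := by
    rw [SimpleGraph.dist_eq_one_iff_adj.symm]
    rw [hg, hpq] at hz2
    simpa using hz2
  have hb1 : {x | G.Adj z x ∧ G.dist p₀ x = i + 1}.ncard = b i := (hb i p₀ z hz1).2.2
  have hne : {x | G.Adj z x ∧ G.dist p₀ x = i + 1}.Nonempty := ⟨q₀, hadj, hpq⟩
  have hbpos : 0 < b i := by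
    rw [← hb1]
    exact (Set.ncard_pos (set_fin _)).mpr hne
  have hb2 : {x | G.Adj w x ∧ G.dist u x = i + 1}.ncard = b i := (hb i u w h).2.2
  have : {x | G.Adj w x ∧ G.dist u x = i + 1}.Nonempty :=
    Set.nonempty_of_ncard_ne_zero (by omega)
  obtain ⟨x, hx1, hx2⟩ := this
  exact ⟨x, hx1, hx2⟩

private lemma no_same (hconn : G.Connected)
    (hodd₂ : ∀ (x : V) (w : G.Walk x x), w.IsCycle → Odd w.length → 2 * d + 1 ≤ w.length)
    (hocc : ∀ (n : ℕ) (x : V) (p : G.Walk x x), p.length = n → Odd n →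
      ∃ (y : V) (c : G.Walk y y), c.IsCycle ∧ Odd c.length ∧ c.length ≤ n)
    {u w x : V} {i : ℕ} (hd : G.dist u w = i) (hi : i < d)
    (ha : G.Adj w x) : G.dist u x ≠ i := by
  intro hx
  obtain ⟨p, hp⟩ := hconn.exists_walk_length_eq_dist u w
  obtain ⟨q, hq⟩ := hconn.exists_walk_length_eq_dist x u
  have hlen : (p.append (SimpleGraph.Walk.cons ha q)).length = 2 * i + 1 := by
    rw [SimpleGraph.Walk.length_append, SimpleGraph.Walk.length_cons, hp, hq, hd,
      SimpleGraph.dist_comm, hx]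
    omega
  have := odd_ge hodd₂ hocc (p.append (SimpleGraph.Walk.cons ha q)) (by rw [hlen]; exact ⟨i, by omega⟩)
  omega

end C2

section C3
variable {V : Type*} {G : SimpleGraph V} {d : ℕ}

private lemma same_at_d [Fintype V] (hconn : G.Connected) (hdr : IsDistRegular G)
    (hdiam : HasDiam G d)
    (hodd₁ : ∃ (x : V) (w : G.Walk x x), w.IsCycle ∧ w.length = 2 * d + 1)
    (hodd₂ : ∀ (x : V) (w : G.Walk x x), w.IsCycle → Odd w.length → 2 * d + 1 ≤ w.length)
    (hocc : ∀ (n : ℕ) (x : V) (p : G.Walk x x), p.length = n → Odd n →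
      ∃ (y : V) (c : G.Walk y y), c.IsCycle ∧ Odd c.length ∧ c.length ≤ n)
    {u w : V} (h : G.dist u w = d) :
    ∃ x, G.Adj w x ∧ G.dist u x = d := by
  obtain ⟨x₀, c0, hc0, hl0⟩ := hodd₁
  set f : ℕ → ℕ := fun j => G.dist x₀ (c0.getVert j) with hf
  -- find adjacent pair at distance d
  have key : ∃ j, j < 2 * d + 1 ∧ f j = d ∧ f (j + 1) = d := by
    by_contra hcon
    push_neg at hcon
    have hstep : ∀ j, j < 2 * d + 1 → f (j + 1) = f j + 1 ∨ f j = f (j + 1) + 1 := by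
      intro j hj
      have hadj : G.Adj (c0.getVert j) (c0.getVert (j + 1)) :=
        c0.adj_getVert_succ (by omega)
      have h1 : f (j + 1) ≤ f j + 1 := by
        have := hconn.dist_triangle (u := x₀) (v := c0.getVert j) (w := c0.getVert (j+1))
        have h2 : G.dist (c0.getVert j) (c0.getVert (j+1)) = 1 :=
          SimpleGraph.dist_eq_one_iff_adj.mpr hadj
        simp only [hf]
        omega
      have h2 : f j ≤ f (j + 1) + 1 := by
        have := hconn.dist_triangle (u := x₀) (v := c0.getVert (j+1)) (w := c0.getVert j)
        have h2 : G.dist (c0.getVert (j+1)) (c0.getVert j) = 1 :=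
          SimpleGraph.dist_eq_one_iff_adj.mpr hadj.symm
        simp only [hf]
        omega
      have hne : f (j + 1) ≠ f j := by
        intro heq
        by_cases hfd : f j < d
        · exact no_same hconn hodd₂ hocc rfl hfd hadj heq
        · have hle : f j ≤ d := hdiam.1 _ _
          exact hcon j hj (by omega) (by omega)
      omega
    have inv : ∀ j, j ≤ 2 * d + 1 → (f j + j) % 2 = 0 := by
      intro j
      induction j with
      | zero => intro _; simp [hf, SimpleGraph.dist_self]
      | succ j ihj =>
        intro hj
        have := ihj (by omega)
        rcases hstep j (by omega) with h1 | h1 <;> omega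
    have h1 := inv (2 * d + 1) (le_refl _)
    have h2 : f (2 * d + 1) = 0 := by
      have : c0.getVert (2 * d + 1) = x₀ := by
        rw [← hl0]
        exact c0.getVert_length
      simp [hf, this]
    omega
  obtain ⟨j, hj, hfj, hfj1⟩ := key
  obtain ⟨c, a, b, hb⟩ := hdr
  have hadj : G.Adj (c0.getVert j) (c0.getVert (j + 1)) := c0.adj_getVert_succ (by omega)
  have ha1 : {x | G.Adj (c0.getVert j) x ∧ G.dist x₀ x = d}.ncard = a d := (hb d x₀ _ hfj).2.1
  have hapos : 0 < a d := by
    rw [← ha1]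
    exact (Set.ncard_pos (set_fin _)).mpr ⟨c0.getVert (j+1), hadj, hfj1⟩
  have ha2 : {x | G.Adj w x ∧ G.dist u x = d}.ncard = a d := (hb d u w h).2.1
  have hne : {x | G.Adj w x ∧ G.dist u x = d}.Nonempty :=
    Set.nonempty_of_ncard_ne_zero (by omega)
  obtain ⟨x, hx1, hx2⟩ := hne
  exact ⟨x, hx1, hx2⟩

private lemma walk_opp [Fintype V] (hconn : G.Connected) (hdr : IsDistRegular G)
    (hdiam : HasDiam G d)
    (hodd₁ : ∃ (x : V) (w : G.Walk x x), w.IsCycle ∧ w.length = 2 * d + 1)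
    (hodd₂ : ∀ (x : V) (w : G.Walk x x), w.IsCycle → Odd w.length → 2 * d + 1 ≤ w.length)
    (hocc : ∀ (n : ℕ) (x : V) (p : G.Walk x x), p.length = n → Odd n →
      ∃ (y : V) (c : G.Walk y y), c.IsCycle ∧ Odd c.length ∧ c.length ≤ n)
    (u w : V) :
    ∃ p : G.Walk u w, p.length = 2 * d + 1 - G.dist u w := by
  have chain : ∀ j, G.dist u w + j ≤ d →
      ∃ (z : V) (q : G.Walk w z), q.length = j ∧ G.dist u z = G.dist u w + j := by
    intro j
    induction j with
    | zero => intro _; exact ⟨w, SimpleGraph.Walk.nil, by simp⟩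
    | succ j ihj =>
      intro hj
      obtain ⟨z, q, hq1, hq2⟩ := ihj (by omega)
      obtain ⟨z', hz1, hz2⟩ := extend hconn hdr hdiam hq2 (by omega)
      exact ⟨z', q.concat hz1, by simp [SimpleGraph.Walk.length_concat, hq1], by omega⟩
  have hk : G.dist u w ≤ d := hdiam.1 _ _
  obtain ⟨z, q, hq1, hq2⟩ := chain (d - G.dist u w) (by omega)
  have hq2' : G.dist u z = d := by omega
  obtain ⟨z', hz1, hz2⟩ := same_at_d hconn hdr hdiam hodd₁ hodd₂ hocc hq2'
  obtain ⟨g, hg⟩ := hconn.exists_walk_length_eq_dist u z'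
  refine ⟨g.append (SimpleGraph.Walk.cons hz1.symm q.reverse), ?_⟩
  rw [SimpleGraph.Walk.length_append, SimpleGraph.Walk.length_cons,
    SimpleGraph.Walk.length_reverse, hg, hz2, hq1]
  omega

private lemma opp_lower (hconn : G.Connected)
    (hodd₂ : ∀ (x : V) (w : G.Walk x x), w.IsCycle → Odd w.length → 2 * d + 1 ≤ w.length)
    (hocc : ∀ (n : ℕ) (x : V) (p : G.Walk x x), p.length = n → Odd n →
      ∃ (y : V) (c : G.Walk y y), c.IsCycle ∧ Odd c.length ∧ c.length ≤ n)
    {u w : V} (p : G.Walk u w) (hpar : ¬ (Even p.length ↔ Even (G.dist u w))) :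
    2 * d + 1 - G.dist u w ≤ p.length := by
  obtain ⟨g, hg⟩ := hconn.exists_walk_length_eq_dist u w
  have hodd : Odd (p.append g.reverse).length := by
    rw [SimpleGraph.Walk.length_append, SimpleGraph.Walk.length_reverse, hg]
    rcases Nat.even_or_odd p.length with h1 | h1
    · rcases Nat.even_or_odd (G.dist u w) with h2 | h2
      · exact absurd (iff_of_true h1 h2) hpar
      · obtain ⟨m, hm⟩ := h1; obtain ⟨l, hl⟩ := h2; exact ⟨m + l, by omega⟩
    · rcases Nat.even_or_odd (G.dist u w) with h2 | h2
      · obtain ⟨m, hm⟩ := h1; obtain ⟨l, hl⟩ := h2; exact ⟨m + l, by omega⟩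
      · exact absurd (iff_of_false (Nat.not_even_iff_odd.mpr h1)
          (Nat.not_even_iff_odd.mpr h2)) hpar
  have := odd_ge hodd₂ hocc _ hodd
  rw [SimpleGraph.Walk.length_append, SimpleGraph.Walk.length_reverse, hg] at this
  omega

end C3

section C4
variable {V : Type*} {G : SimpleGraph V} {d : ℕ}

private lemma bipAdj (P Q : V × Bool) :
    (bipDouble G).Adj P Q ↔ P.2 ≠ Q.2 ∧ G.Adj P.1 Q.1 := by
  obtain ⟨u, b⟩ := P
  obtain ⟨w, c⟩ := Q
  simp only [bipDouble, SimpleGraph.fromRel_adj]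
  constructor
  · rintro ⟨-, h | h⟩
    · exact h
    · exact ⟨h.1.symm, h.2.symm⟩
  · intro h
    refine ⟨?_, Or.inl h⟩
    intro heq
    exact h.1 (congrArg Prod.snd heq)

private lemma projWalk :
    ∀ {P Q : V × Bool} (p : (bipDouble G).Walk P Q),
      ∃ q : G.Walk P.1 Q.1, q.length = p.length ∧ (P.2 = Q.2 ↔ Even p.length) := by
  intro P Q p
  induction p with
  | nil => exact ⟨SimpleGraph.Walk.nil, by simp⟩
  | @cons P R Q h p ih =>
    obtain ⟨q, hq, hpar⟩ := ih
    have hadj := (bipAdj P R).mp h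
    refine ⟨SimpleGraph.Walk.cons hadj.2 q, by simp [hq], ?_⟩
    rw [SimpleGraph.Walk.length_cons, Nat.even_add_one, ← hpar]
    have := hadj.1
    cases hb : P.2 <;> cases hc : R.2 <;> cases hd2 : Q.2 <;> simp_all

private lemma liftWalk :
    ∀ {u w : V} (q : G.Walk u w) (b c : Bool), (b = c ↔ Even q.length) →
      ∃ p : (bipDouble G).Walk (u, b) (w, c), p.length = q.length := by
  intro u w q
  induction q with
  | nil =>
    intro b c h
    obtain rfl : b = c := h.mpr (by simp)
    exact ⟨SimpleGraph.Walk.nil, rfl⟩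
  | @cons u y w h q ih =>
    intro b c hbc
    rw [SimpleGraph.Walk.length_cons, Nat.even_add_one] at hbc
    have h1 : (!b) = c ↔ Even q.length := by
      cases hb : b <;> cases hc : c <;> simp_all
    obtain ⟨p, hp⟩ := ih (!b) c h1
    refine ⟨SimpleGraph.Walk.cons ((bipAdj (u, b) (y, !b)).mpr ⟨by simp, h⟩) p, ?_⟩
    simp [hp]

private lemma distD_match [Fintype V] (hconn : G.Connected)
    {u w : V} {b c : Bool} (h : (b = c) ↔ Even (G.dist u w)) :
    (bipDouble G).dist (u, b) (w, c) = G.dist u w := by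
  obtain ⟨g, hg⟩ := hconn.exists_walk_length_eq_dist u w
  obtain ⟨p, hp⟩ := liftWalk g b c (by rw [hg]; exact h)
  have hub : (bipDouble G).dist (u, b) (w, c) ≤ G.dist u w := by
    have := SimpleGraph.dist_le p
    omega
  have hreach : (bipDouble G).Reachable (u, b) (w, c) := ⟨p⟩
  obtain ⟨p₀, hp₀⟩ := hreach.exists_walk_length_eq_dist
  obtain ⟨q, hq, hpar⟩ := projWalk p₀
  have hlb : G.dist u w ≤ q.length := SimpleGraph.dist_le q
  omega

private lemma distD_mismatch [Fintype V] (hconn : G.Connected) (hdr : IsDistRegular G)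
    (hdiam : HasDiam G d)
    (hodd₁ : ∃ (x : V) (w : G.Walk x x), w.IsCycle ∧ w.length = 2 * d + 1)
    (hodd₂ : ∀ (x : V) (w : G.Walk x x), w.IsCycle → Odd w.length → 2 * d + 1 ≤ w.length)
    (hocc : ∀ (n : ℕ) (x : V) (p : G.Walk x x), p.length = n → Odd n →
      ∃ (y : V) (c : G.Walk y y), c.IsCycle ∧ Odd c.length ∧ c.length ≤ n)
    {u w : V} {b c : Bool} (h : ¬ ((b = c) ↔ Even (G.dist u w))) :
    (bipDouble G).dist (u, b) (w, c) = 2 * d + 1 - G.dist u w := by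
  have hk : G.dist u w ≤ d := hdiam.1 _ _
  have hpar : Even (2 * d + 1 - G.dist u w) ↔ ¬ Even (G.dist u w) := by
    rw [Nat.even_sub (by omega : G.dist u w ≤ 2 * d + 1)]
    simp [Nat.even_add_one]
  obtain ⟨q, hq⟩ := walk_opp hconn hdr hdiam hodd₁ hodd₂ hocc u w
  have hl1 : (b = c) ↔ Even q.length := by
    rw [hq, hpar]
    tauto
  obtain ⟨p, hp⟩ := liftWalk q b c hl1
  have hub : (bipDouble G).dist (u, b) (w, c) ≤ 2 * d + 1 - G.dist u w := by
    have := SimpleGraph.dist_le p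
    omega
  have hreach : (bipDouble G).Reachable (u, b) (w, c) := ⟨p⟩
  obtain ⟨p₀, hp₀⟩ := hreach.exists_walk_length_eq_dist
  obtain ⟨q', hq', hpar'⟩ := projWalk p₀
  have hmm : ¬ (Even q'.length ↔ Even (G.dist u w)) := by
    rw [hq']
    simp only at hpar'
    tauto
  have := opp_lower hconn hodd₂ hocc q' hmm
  have hfix : G.dist (u, b).1 (w, c).1 = G.dist u w := rfl
  omega

end C4

section C5
variable {V : Type*} [Fintype V] {G : SimpleGraph V} {d : ℕ}

private lemma distD_parity (hconn : G.Connected) (hdr : IsDistRegular G)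
    (hdiam : HasDiam G d)
    (hodd₁ : ∃ (x : V) (w : G.Walk x x), w.IsCycle ∧ w.length = 2 * d + 1)
    (hodd₂ : ∀ (x : V) (w : G.Walk x x), w.IsCycle → Odd w.length → 2 * d + 1 ≤ w.length)
    (hocc : ∀ (n : ℕ) (x : V) (p : G.Walk x x), p.length = n → Odd n →
      ∃ (y : V) (c : G.Walk y y), c.IsCycle ∧ Odd c.length ∧ c.length ≤ n)
    (u v : V) (b e : Bool) :
    Even ((bipDouble G).dist (u, b) (v, e)) ↔ (b = e) := by
  by_cases h : (b = e) ↔ Even (G.dist u v)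
  · rw [distD_match hconn h]
    exact h.symm
  · rw [distD_mismatch hconn hdr hdiam hodd₁ hodd₂ hocc h]
    have hk : G.dist u v ≤ d := hdiam.1 _ _
    have hpar : Even (2 * d + 1 - G.dist u v) ↔ ¬ Even (G.dist u v) := by
      rw [Nat.even_sub (by omega : G.dist u v ≤ 2 * d + 1)]
      simp [Nat.even_add_one]
    rw [hpar]
    tauto

theorem stmt10' {V : Type*} [Fintype V] (G : SimpleGraph V) (d : ℕ)
    (hconn : G.Connected) (hdr : IsDistRegular G) (hdiam : HasDiam G d)
    (hodd₁ : ∃ (x : V) (w : G.Walk x x), w.IsCycle ∧ w.length = 2 * d + 1)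
    (hodd₂ : ∀ (x : V) (w : G.Walk x x), w.IsCycle → Odd w.length →
      2 * d + 1 ≤ w.length) :
    metricDim (bipDouble G) = metricDim G := by
  classical
  have hocc : ∀ (n : ℕ) (x : V) (p : G.Walk x x), p.length = n → Odd n →
      ∃ (y : V) (c : G.Walk y y), c.IsCycle ∧ Odd c.length ∧ c.length ≤ n :=
    fun n x p h1 h2 => odd_closed_walk_cycle n x p h1 h2
  obtain ⟨x₀, c0, hc0, hl0⟩ := hodd₁
  have hodd₁' : ∃ (x : V) (w : G.Walk x x), w.IsCycle ∧ w.length = 2 * d + 1 :=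
    ⟨x₀, c0, hc0, hl0⟩
  have hadj01 : G.Adj x₀ (c0.getVert 1) := by
    have := c0.adj_getVert_succ (i := 0) (by rw [hl0]; omega)
    simpa using this
  have hex2 : ∃ a1 a2 : V, a1 ≠ a2 := ⟨x₀, c0.getVert 1, hadj01.ne⟩
  -- resolving sets transfer
  have transfer1 : ∀ S : Set (V × Bool), IsResolving (bipDouble G) S →
      IsResolving G (Prod.fst '' S) := by
    intro S hS u w hne
    obtain ⟨P, hPS, hPd⟩ := hS (u, true) (w, true)
      (fun hh => hne (congrArg Prod.fst hh))
    obtain ⟨v, e⟩ := P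
    refine ⟨v, ⟨(v, e), hPS, rfl⟩, ?_⟩
    intro heq
    apply hPd
    by_cases hm : (true = e) ↔ Even (G.dist u v)
    · rw [distD_match hconn hm, distD_match hconn (by rw [← heq]; exact hm), heq]
    · rw [distD_mismatch hconn hdr hdiam hodd₁' hodd₂ hocc hm,
        distD_mismatch hconn hdr hdiam hodd₁' hodd₂ hocc (by rw [← heq]; exact hm), heq]
  have transfer2 : ∀ R : Set V, IsResolving G R →
      IsResolving (bipDouble G) ((fun v => (v, true)) '' R) := by
    intro R hR
    obtain ⟨a1, a2, ha⟩ := hex2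
    obtain ⟨v₀, hv₀, -⟩ := hR a1 a2 ha
    rintro ⟨u, b⟩ ⟨w, c⟩ hne
    by_cases hbc : b = c
    · subst hbc
      have hne' : u ≠ w := by
        intro hh
        exact hne (by rw [hh])
      obtain ⟨v, hv, hdvv⟩ := hR u w hne'
      refine ⟨(v, true), ⟨v, hv, rfl⟩, ?_⟩
      have hk : G.dist u v ≤ d := hdiam.1 _ _
      have hl : G.dist w v ≤ d := hdiam.1 _ _
      by_cases h1 : (b = true) ↔ Even (G.dist u v) <;>
        by_cases h2 : (b = true) ↔ Even (G.dist w v)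
      · rw [distD_match hconn h1, distD_match hconn h2]
        exact hdvv
      · rw [distD_match hconn h1, distD_mismatch hconn hdr hdiam hodd₁' hodd₂ hocc h2]
        omega
      · rw [distD_mismatch hconn hdr hdiam hodd₁' hodd₂ hocc h1, distD_match hconn h2]
        omega
      · rw [distD_mismatch hconn hdr hdiam hodd₁' hodd₂ hocc h1,
          distD_mismatch hconn hdr hdiam hodd₁' hodd₂ hocc h2]
        omega
    · refine ⟨(v₀, true), ⟨v₀, hv₀, rfl⟩, ?_⟩
      intro heq
      have p1 := distD_parity hconn hdr hdiam hodd₁' hodd₂ hocc u v₀ b true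
      have p2 := distD_parity hconn hdr hdiam hodd₁' hodd₂ hocc w v₀ c true
      rw [heq] at p1
      have : (b = true) ↔ (c = true) := p1.symm.trans p2
      cases b <;> cases c <;> simp_all
  -- resolving sets exist
  have hresG : IsResolving G Set.univ := by
    intro u w hne
    refine ⟨u, trivial, ?_⟩
    rw [SimpleGraph.dist_self]
    exact fun hh => (hconn.pos_dist_of_ne (Ne.symm hne)).ne (by omega)
  have hSG : {n | ∃ R : Set V, IsResolving G R ∧ R.ncard = n}.Nonempty :=
    ⟨_, Set.univ, hresG, rfl⟩
  have hSD : {n | ∃ S : Set (V × Bool), IsResolving (bipDouble G) S ∧ S.ncard = n}.Nonempty :=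
    ⟨_, (fun v => (v, true)) '' Set.univ, transfer2 _ hresG, rfl⟩
  have e1 : metricDim G = sInf {n | ∃ R : Set V, IsResolving G R ∧ R.ncard = n} := rfl
  have e2 : metricDim (bipDouble G) =
      sInf {n | ∃ S : Set (V × Bool), IsResolving (bipDouble G) S ∧ S.ncard = n} := rfl
  apply le_antisymm
  · obtain ⟨R, hR, hcard⟩ := Nat.sInf_mem hSG
    have h2 := transfer2 R hR
    have hle : metricDim (bipDouble G) ≤ ((fun v => (v, true)) '' R).ncard := by
      rw [e2]
      exact Nat.sInf_le ⟨_, h2, rfl⟩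
    rw [Set.ncard_image_of_injective R (fun a b hab => congrArg Prod.fst hab)] at hle
    rw [e1] at *
    omega
  · obtain ⟨S, hS, hcard⟩ := Nat.sInf_mem hSD
    have h1 := transfer1 S hS
    have hle : metricDim G ≤ (Prod.fst '' S).ncard := by
      rw [e1]
      exact Nat.sInf_le ⟨_, h1, rfl⟩
    have hle2 : (Prod.fst '' S).ncard ≤ S.ncard := Set.ncard_image_le S.toFinite
    rw [e2] at *
    omega

end C5

theorem stmt10 {V : Type*} [Fintype V] (G : SimpleGraph V) (d : ℕ)
    (hconn : G.Connected) (hdr : IsDistRegular G) (hdiam : HasDiam G d)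
    (hodd₁ : ∃ (x : V) (w : G.Walk x x), w.IsCycle ∧ w.length = 2 * d + 1)
    (hodd₂ : ∀ (x : V) (w : G.Walk x x), w.IsCycle → Odd w.length →
      2 * d + 1 ≤ w.length) :
    metricDim (bipDouble G) = metricDim G := by
  exact stmt10' G d hconn hdr hdiam hodd₁ hodd₂
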